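/- Let (T, [−,−,−], ·) be a truss and e ∈ T. Define a +_e b := [a, e, b] and a ∘ b := [[a·b, a·e, e], [e·b, e·e, e], e]. Then (T, +_e) is an abelian group with zero e and inverse a ↦ [e, a, e], the operation ∘ is associative, and ∘ distributes over +_e on both sides; that is, (T, +_e, ∘) is an associative ring (denoted R(T;e)). -/
import Mathlib


/-- The retract addition `a +_e b := [a, e, b]` of a truss at `e`. -/
def tadd {T : Type*} (br : T → T → T → T) (e a b : T) : T := br a e b

/-- The ring multiplication `a ∘ b := [[a·b, a·e, e], [e·b, e·e, e], e]` on the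
retract of a truss at `e`. -/
def tcirc {T : Type*} (br : T → T → T → T) (mul : T → T → T) (e a b : T) : T :=
  br (br (mul a b) (mul a e) e) (br (mul e b) (mul e e) e) e

/-- For any truss `(T, [−,−,−], ·)` and any `e ∈ T`, the retract `(T, +_e)` is an
abelian group with zero `e` and inverses `a ↦ [e,a,e]`, and the operation
`a ∘ b = [[a·b, a·e, e], [e·b, e·e, e], e]` is associative and distributes over
`+_e`: `(T, +_e, ∘)` is an associative ring `R(T;e)`. -/
theorem truss_retract_ring {T : Type*} (br : T → T → T → T) (mul : T → T → T)
    (hassoc : ∀ a b c d f : T, br a b (br c d f) = br (br a b c) d f)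
    (hml : ∀ a b : T, br a a b = b)
    (hmr : ∀ a b : T, br a b b = a)
    (hcomm : ∀ a b c : T, br a b c = br c b a)
    (hmulassoc : ∀ a b c : T, mul (mul a b) c = mul a (mul b c))
    (hdistl : ∀ a b c d : T, mul a (br b c d) = br (mul a b) (mul a c) (mul a d))
    (hdistr : ∀ a b c d : T, mul (br a b c) d = br (mul a d) (mul b d) (mul c d))
    (e : T) :
    (∀ a b c : T, tadd br e (tadd br e a b) c = tadd br e a (tadd br e b c)) ∧
    (∀ a b : T, tadd br e a b = tadd br e b a) ∧
    (∀ a : T, tadd br e e a = a) ∧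
    (∀ a : T, tadd br e a e = a) ∧
    (∀ a : T, tadd br e a (br e a e) = e) ∧
    (∀ a b c : T,
      tcirc br mul e (tcirc br mul e a b) c = tcirc br mul e a (tcirc br mul e b c)) ∧
    (∀ a b c : T,
      tcirc br mul e a (tadd br e b c)
        = tadd br e (tcirc br mul e a b) (tcirc br mul e a c)) ∧
    (∀ a b c : T,
      tcirc br mul e (tadd br e a b) c
        = tadd br e (tcirc br mul e a c) (tcirc br mul e b c)) := by

  letI : Add T := ⟨fun a b => br a e b⟩
  letI : Zero T := ⟨e⟩
  letI : Neg T := ⟨fun a => br e a e⟩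
  letI G : AddCommGroup T :=
    { add_assoc := fun a b c => (hassoc a e b e c).symm
      zero_add := fun a => hml e a
      add_zero := fun a => hmr a e
      add_comm := fun a b => hcomm a e b
      neg_add_cancel := fun a => by
        show br (br e a e) e a = e
        rw [← hassoc, hml, hmr]
      nsmul := nsmulRec
      zsmul := zsmulRec }
  have hzero : (0 : T) = e := rfl
  have br_eq : ∀ a b c : T, br a b c = a - b + c := by
    intro a b c
    have h1 : a - b + c = br (br a e (br e b e)) e c := rfl
    have h2 : br a e (br e b e) = br a b e := by rw [hassoc, hmr]
    rw [h1, h2, ← hassoc, hml]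
  have keyr : ∀ x y z w : T, mul (x - y + z) w = mul x w - mul y w + mul z w := by
    intro x y z w; rw [← br_eq, hdistr, br_eq]
  have keyl : ∀ w x y z : T, mul w (x - y + z) = mul w x - mul w y + mul w z := by
    intro w x y z; rw [← br_eq, hdistl, br_eq]
  have tc : ∀ a b : T, tcirc br mul e a b
      = mul a b - mul a e - mul e b + mul e e := by
    intro a b
    unfold tcirc
    rw [br_eq, br_eq, br_eq]
    simp only [← hzero]
    abel
  have expr : ∀ x1 x2 x3 x4 w : T, mul (x1 - x2 - x3 + x4) w
      = mul x1 w - mul x2 w + mul e w - mul x3 w + mul x4 w := by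
    intro x1 x2 x3 x4 w
    rw [show x1 - x2 - x3 + x4 = x1 - x2 + (e - x3 + x4) by
      simp only [← hzero]; abel]
    rw [keyr, keyr]
    abel
  have expl : ∀ w x1 x2 x3 x4 : T, mul w (x1 - x2 - x3 + x4)
      = mul w x1 - mul w x2 + mul w e - mul w x3 + mul w x4 := by
    intro w x1 x2 x3 x4
    rw [show x1 - x2 - x3 + x4 = x1 - x2 + (e - x3 + x4) by
      simp only [← hzero]; abel]
    rw [keyl, keyl]
    abel
  refine ⟨fun a b c => (hassoc a e b e c).symm, fun a b => hcomm a e b,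
    fun a => hml e a, fun a => hmr a e, ?_, ?_, ?_, ?_⟩
  · intro a
    show br a e (br e a e) = e
    rw [hassoc, hmr, hml]
  · intro a b c
    simp only [tc, expr, expl, hmulassoc]
    simp only [← hzero]
    abel
  · intro a b c
    simp only [tadd, tc, br_eq, keyl]
    simp only [← hzero]
    abel
  · intro a b c
    simp only [tadd, tc, br_eq, keyr]
    simp only [← hzero]
    abel
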